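/- Fix positive integers M and K, complex column vectors h_1,…,h_K ∈ ℂ^M, a real constant c > 0, and equal target rates r_k = r_G > 0 for all k. Let π be a permutation of {1,…,K}, let u ∈ {1,…,K−1}, write p = π(u), o = π(u+1), and T_{o,p} = {π(u+2),…,π(K)}. Suppose R_o^{{p}∪T_{o,p}} ≥ R_p^{{o}∪T_{o,p}}, i.e., among the two users at positions u and u+1, user o has the higher achievable rate when all later users (and the other of the two) interfere. Let π' be the permutation obtained from π by swapping positions u and u+1 (so π'(u) = o, π'(u+1) = p, and π' = π elsewhere). Then |S*_SIC(π')| ≥ |S*_SIC(π)|: putting the higher-rate user first never decreases the number of SIC-decodable users in an equal-rate system. -/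

import Mathlib

open Matrix BigOperators

/-- `gram h T = ∑ k ∈ T, h k (h k)^H`, the Gram (interference covariance) matrix of the
channel vectors of the users in `T`. -/
noncomputable def gram {M K : ℕ} (h : Fin K → Fin M → ℂ)
    (T : Finset (Fin K)) : Matrix (Fin M) (Fin M) ℂ :=
  ∑ k ∈ T, Matrix.vecMulVec (h k) (star (h k))

/-- Achievable (sum) rate of the user group `S` under interference from the user group `T`:
`R_S^T = log₂ (det (I + c (G_S + G_T)) / det (I + c G_T))`, both determinants being
positive reals (as determinants of `I` plus a positive semidefinite Hermitian matrix). -/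
noncomputable def rate {M K : ℕ} (h : Fin K → Fin M → ℂ) (c : ℝ)
    (S T : Finset (Fin K)) : ℝ :=
  Real.logb 2
    (((1 + (c : ℂ) • (gram h S + gram h T)).det).re /
      ((1 + (c : ℂ) • gram h T).det).re)

open scoped Classical

/-- The number of users successfully decoded by successive interference cancellation with
decoding order `e` at target rates `r`: with `T_u = {e v : v > u}`, it is `u* - 1` where
`u*` is the first position at which `r (e u) > R_{e u}^{T_u}` (and `K` if no position
fails), i.e. the cardinality of the SIC-decodable set `S*_SIC = {e 1, …, e (u*-1)}`. -/
noncomputable def sicCount {M K : ℕ} (h : Fin K → Fin M → ℂ) (c : ℝ)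
    (r : Fin K → ℝ) (e : Equiv.Perm (Fin K)) : ℕ :=
  (Finset.univ.filter (fun u : Fin K =>
    ∀ v ≤ u, r (e v) ≤ rate h c {e v} ((Finset.Ioi v).image e))).card

open scoped ComplexOrder

section Aux

variable {M K : ℕ}

lemma vecMulVec_posSemidef (v : Fin M → ℂ) : (vecMulVec v (star v)).PosSemidef := by
  rw [vecMulVec_eq Unit, ← conjTranspose_replicateCol]
  exact posSemidef_self_mul_conjTranspose _

lemma gram_posSemidef (h : Fin K → Fin M → ℂ) (T : Finset (Fin K)) :
    (gram h T).PosSemidef := by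
  classical
  unfold _root_.gram
  induction T using Finset.induction with
  | empty => simpa using (Matrix.PosSemidef.zero : (0 : Matrix (Fin M) (Fin M) ℂ).PosSemidef)
  | insert _ _ hx ih =>
      rw [Finset.sum_insert hx]
      exact (vecMulVec_posSemidef _).add ih

lemma psd_smul {A : Matrix (Fin M) (Fin M) ℂ} (hA : A.PosSemidef) {c : ℝ} (hc : 0 ≤ c) :
    ((c : ℂ) • A).PosSemidef := by
  refine Matrix.PosSemidef.of_dotProduct_mulVec_nonneg ?_ (fun x => ?_)
  · show ((c : ℂ) • A)ᴴ = (c : ℂ) • A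
    rw [Matrix.conjTranspose_smul, hA.1, Complex.star_def, Complex.conj_ofReal]
  · rw [Matrix.smul_mulVec, dotProduct_smul, smul_eq_mul]
    exact mul_nonneg (by exact_mod_cast hc) (hA.dotProduct_mulVec_nonneg x)

lemma one_add_posDef {A : Matrix (Fin M) (Fin M) ℂ} (hA : A.PosSemidef) :
    (1 + A).PosDef :=
  Matrix.PosDef.add_posSemidef Matrix.PosDef.one hA

lemma det_re_pos {A : Matrix (Fin M) (Fin M) ℂ} (hA : A.PosDef) :
    0 < A.det.re ∧ A.det.im = 0 := by
  have h := hA.det_pos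
  rw [Complex.lt_def] at h
  simp only [Complex.zero_re, Complex.zero_im] at h
  exact ⟨h.1, h.2.symm⟩

lemma herm_dot {P : Matrix (Fin M) (Fin M) ℂ} (hP : P.IsHermitian) (a b : Fin M → ℂ) :
    star (P *ᵥ a) ⬝ᵥ b = star a ⬝ᵥ (P *ᵥ b) := by
  rw [star_mulVec, ← Matrix.dotProduct_mulVec, hP.eq]

lemma dot_nonneg_re {A : Matrix (Fin M) (Fin M) ℂ} (hA : A.PosSemidef) (x : Fin M → ℂ) :
    0 ≤ (star x ⬝ᵥ (A *ᵥ x)).re := by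
  have h := hA.dotProduct_mulVec_nonneg x
  rw [Complex.le_def] at h
  simpa using h.1

lemma dot_im_zero {A : Matrix (Fin M) (Fin M) ℂ} (hA : A.PosSemidef) (x : Fin M → ℂ) :
    (star x ⬝ᵥ (A *ᵥ x)).im = 0 := by
  have h := hA.dotProduct_mulVec_nonneg x
  rw [Complex.le_def] at h
  simpa using h.2.symm

/-- Matrix determinant lemma, rank-one form. -/
lemma det_add_vecMulVec {P : Matrix (Fin M) (Fin M) ℂ} (hP : IsUnit P.det)
    (a b : Fin M → ℂ) :
    (P + vecMulVec a b).det = P.det * (1 + b ⬝ᵥ (P⁻¹ *ᵥ a)) := by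
  rw [vecMulVec_eq Unit, Matrix.det_add_replicateCol_mul_replicateRow hP]
  congr 1
  rw [det_unique, Matrix.add_apply, Matrix.one_apply_eq, ← Matrix.replicateRow_vecMul,
    Matrix.replicateRow_mul_replicateCol_apply, ← Matrix.dotProduct_mulVec]

/-- Core quadratic-form monotonicity: adding PSD interference decreases `vᴴ X⁻¹ v`. -/
lemma quad_mono {P Q : Matrix (Fin M) (Fin M) ℂ} (hP : P.PosDef) (hQ : Q.PosSemidef)
    (v : Fin M → ℂ) :
    (star v ⬝ᵥ ((P + Q)⁻¹ *ᵥ v)).re ≤ (star v ⬝ᵥ (P⁻¹ *ᵥ v)).re := by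
  have hPQ : (P + Q).PosDef := hP.add_posSemidef hQ
  set y := (P + Q)⁻¹ *ᵥ v with hy
  set w := P⁻¹ *ᵥ v with hw
  have hPw : P *ᵥ w = v := by
    rw [hw, Matrix.mulVec_mulVec, Matrix.mul_nonsing_inv _ hP.det_pos.ne'.isUnit,
      Matrix.one_mulVec]
  have hPQy : (P + Q) *ᵥ y = v := by
    rw [hy, Matrix.mulVec_mulVec, Matrix.mul_nonsing_inv _ hPQ.det_pos.ne'.isUnit,
      Matrix.one_mulVec]
  have h1 : star w ⬝ᵥ (P *ᵥ y) = star v ⬝ᵥ y := by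
    rw [← herm_dot hP.isHermitian, hPw]
  have h2 : star y ⬝ᵥ (P *ᵥ w) = star y ⬝ᵥ v := by rw [hPw]
  have h3 : star w ⬝ᵥ (P *ᵥ w) = star w ⬝ᵥ v := by rw [hPw]
  have h4 : star y ⬝ᵥ (P *ᵥ y) + star y ⬝ᵥ (Q *ᵥ y) = star y ⬝ᵥ v := by
    rw [← dotProduct_add, ← Matrix.add_mulVec, hPQy]
  have expand : star (y - w) ⬝ᵥ (P *ᵥ (y - w)) =
      star y ⬝ᵥ (P *ᵥ y) - star y ⬝ᵥ (P *ᵥ w) - star w ⬝ᵥ (P *ᵥ y)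
        + star w ⬝ᵥ (P *ᵥ w) := by
    rw [Matrix.mulVec_sub, star_sub, sub_dotProduct, dotProduct_sub, dotProduct_sub]
    ring
  have key : star w ⬝ᵥ v =
      star (y - w) ⬝ᵥ (P *ᵥ (y - w)) + star y ⬝ᵥ (Q *ᵥ y) + star v ⬝ᵥ y := by
    rw [expand, h1, h2, h3]
    linear_combination -h4
  have hre1 : 0 ≤ (star (y - w) ⬝ᵥ (P *ᵥ (y - w))).re := dot_nonneg_re hP.posSemidef _
  have hre2 : 0 ≤ (star y ⬝ᵥ (Q *ᵥ y)).re := dot_nonneg_re hQ _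
  have hconj : (star w ⬝ᵥ v).re = (star v ⬝ᵥ w).re := by
    rw [star_dotProduct]
    simp
  have hkey := congrArg Complex.re key
  simp only [Complex.add_re] at hkey
  rw [hconj] at hkey
  linarith

/-- `rate` of a singleton via the rank-one determinant lemma. -/
lemma rate_singleton (h : Fin K → Fin M → ℂ) {c : ℝ} (hc : 0 < c) (k : Fin K)
    (T : Finset (Fin K)) :
    rate h c {k} T = Real.logb 2
      (1 + c * (star (h k) ⬝ᵥ ((1 + (c : ℂ) • gram h T)⁻¹ *ᵥ h k)).re) := by
  classical
  set P : Matrix (Fin M) (Fin M) ℂ := 1 + (c : ℂ) • gram h T with hPdef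
  have hPpd : P.PosDef := one_add_posDef (psd_smul (gram_posSemidef h T) hc.le)
  have hPu : IsUnit P.det := hPpd.det_pos.ne'.isUnit
  have hgramk : gram h {k} = vecMulVec (h k) (star (h k)) := Finset.sum_singleton _ _
  have hsplit : 1 + (c : ℂ) • (gram h {k} + gram h T) =
      P + vecMulVec ((c : ℂ) • h k) (star (h k)) := by
    rw [hgramk, smul_add, hPdef]
    rw [show ((c : ℂ) • vecMulVec (h k) (star (h k)))
        = vecMulVec ((c : ℂ) • h k) (star (h k)) by
      ext i j; simp [vecMulVec_apply, mul_assoc]]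
    abel
  have hq := (hPpd.inv).posSemidef
  set q := star (h k) ⬝ᵥ (P⁻¹ *ᵥ h k) with hqdef
  have hq0 : 0 ≤ q.re := dot_nonneg_re hq _
  have hqim : q.im = 0 := dot_im_zero hq _
  have hdet : (1 + (c : ℂ) • (gram h {k} + gram h T)).det
      = P.det * (1 + (c : ℂ) * q) := by
    rw [hsplit, det_add_vecMulVec hPu]
    congr 2
    rw [Matrix.mulVec_smul, dotProduct_smul, smul_eq_mul]
  have hdim := (det_re_pos hPpd).2
  have hdre := (det_re_pos hPpd).1
  have hnum : (P.det * (1 + (c : ℂ) * q)).re = P.det.re * (1 + c * q.re) := by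
    rw [Complex.mul_re, hdim]
    simp [Complex.add_re, Complex.add_im, Complex.re_ofReal_mul, hqim,
      Complex.mul_im, Complex.ofReal_re, Complex.ofReal_im]
  unfold rate
  rw [hdet, hnum, ← hPdef]
  rw [mul_comm P.det.re (1 + c * q.re), mul_div_assoc, div_self hdre.ne', mul_one]

/-- Adding one more interferer can only decrease the achievable rate. -/
lemma rate_insert_le (h : Fin K → Fin M → ℂ) {c : ℝ} (hc : 0 < c) (k o : Fin K)
    (T : Finset (Fin K)) :
    rate h c {k} (insert o T) ≤ rate h c {k} T := by
  classical
  by_cases ho : o ∈ T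
  · rw [Finset.insert_eq_self.mpr ho]
  · set P : Matrix (Fin M) (Fin M) ℂ := 1 + (c : ℂ) • gram h T with hPdef
    set Q : Matrix (Fin M) (Fin M) ℂ := (c : ℂ) • vecMulVec (h o) (star (h o)) with hQdef
    have hPpd : P.PosDef := one_add_posDef (psd_smul (gram_posSemidef h T) hc.le)
    have hQpsd : Q.PosSemidef := psd_smul (vecMulVec_posSemidef _) hc.le
    have hgram : gram h (insert o T) = vecMulVec (h o) (star (h o)) + gram h T := by
      unfold _root_.gram; rw [Finset.sum_insert ho]
    have hPQ : 1 + (c : ℂ) • gram h (insert o T) = P + Q := by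
      rw [hgram, smul_add, hPdef, hQdef]
      abel
    rw [rate_singleton h hc, rate_singleton h hc, hPQ, ← hPdef]
    have hq := (hPpd.inv).posSemidef
    have hq' := ((hPpd.add_posSemidef hQpsd).inv).posSemidef
    have h1 : (0:ℝ) < 1 + c * (star (h k) ⬝ᵥ ((P + Q)⁻¹ *ᵥ h k)).re := by
      have := dot_nonneg_re hq' (h k)
      nlinarith
    refine Real.logb_le_logb_of_le one_lt_two h1 ?_
    have := quad_mono hPpd hQpsd (h k)
    nlinarith

end Aux

/-- Adjacent-transposition exchange step in the proof of Lemma 5.2: in an equal-rate system,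
with `p = e u`, `o = e u'` the users at adjacent positions `u, u' = u + 1` and
`T_{o,p} = {e v : v > u'}` the later users, if
`R_o^{{p} ∪ T_{o,p}} ≥ R_p^{{o} ∪ T_{o,p}}` then swapping positions `u` and `u'`
(putting the higher-rate user `o` first) never decreases the number of SIC-decodable
users. -/
theorem stmt_8 {M K : ℕ} (hM : 0 < M) (hK : 0 < K) (h : Fin K → Fin M → ℂ)
    (c : ℝ) (hc : 0 < c) (r_G : ℝ) (hrG : 0 < r_G)
    (e : Equiv.Perm (Fin K)) (u u' : Fin K) (hu : (u' : ℕ) = (u : ℕ) + 1)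
    (hgo : rate h c {e u'} (insert (e u) ((Finset.Ioi u').image e)) ≥
        rate h c {e u} (insert (e u') ((Finset.Ioi u').image e))) :
    sicCount h c (fun _ => r_G) e ≤
      sicCount h c (fun _ => r_G) (e * Equiv.swap u u') := by
  classical
  have hlt : u < u' := by rw [Fin.lt_def]; omega
  set e' : Equiv.Perm (Fin K) := e * Equiv.swap u u' with he'
  have he'app : ∀ v, e' v = e (Equiv.swap u u' v) := fun v => rfl
  have hswapu : Equiv.swap u u' u = u' := Equiv.swap_apply_left _ _
  have hswapu' : Equiv.swap u u' u' = u := Equiv.swap_apply_right _ _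
  -- the image of `Ioi v` under the swapped order agrees with the original one off `u`
  have himg : ∀ v : Fin K, v ≠ u →
      (Finset.Ioi v).image ⇑e' = (Finset.Ioi v).image ⇑e := by
    intro v hv
    have hmaps : ∀ w ∈ Finset.Ioi v, Equiv.swap u u' w ∈ Finset.Ioi v := by
      intro w hw
      rw [Finset.mem_Ioi] at hw ⊢
      rcases eq_or_ne w u with rfl | h1
      · rw [hswapu]
        rw [Fin.lt_def] at hw ⊢
        omega
      rcases eq_or_ne w u' with rfl | h2
      · rw [hswapu']
        rw [Fin.lt_def] at hw ⊢
        have hne : (v : ℕ) ≠ (u : ℕ) := fun hvu => hv (Fin.ext hvu)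
        omega
      · rwa [Equiv.swap_apply_of_ne_of_ne h1 h2]
    have hswapim : (Finset.Ioi v).image ⇑(Equiv.swap u u') = Finset.Ioi v := by
      apply Finset.eq_of_subset_of_card_le
      · intro x hx
        obtain ⟨w, hw, rfl⟩ := Finset.mem_image.mp hx
        exact hmaps w hw
      · rw [Finset.card_image_of_injective _ (Equiv.injective _)]
    calc (Finset.Ioi v).image ⇑e'
        = ((Finset.Ioi v).image ⇑(Equiv.swap u u')).image ⇑e := by
          rw [Finset.image_image]; rfl
      _ = (Finset.Ioi v).image ⇑e := by rw [hswapim]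
  have hIoiu : Finset.Ioi u = insert u' (Finset.Ioi u') := by
    ext w
    simp only [Finset.mem_Ioi, Finset.mem_insert, Fin.lt_def, Fin.ext_iff]
    omega
  set T := (Finset.Ioi u').image ⇑e with hT
  have hu'ne : u' ≠ u := ne_of_gt hlt
  have hIT' : (Finset.Ioi u').image ⇑e' = T := himg u' hu'ne
  have hIu : (Finset.Ioi u).image ⇑e = insert (e u') T := by
    rw [hIoiu, Finset.image_insert]
  have hIu' : (Finset.Ioi u).image ⇑e' = insert (e u) T := by
    rw [hIoiu, Finset.image_insert, hIT', he'app, hswapu']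
  unfold sicCount
  apply Finset.card_le_card
  intro u₀ hu₀
  rw [Finset.mem_filter] at hu₀ ⊢
  obtain ⟨-, hQ⟩ := hu₀
  refine ⟨Finset.mem_univ _, ?_⟩
  intro v hv
  rcases eq_or_ne v u with rfl | hvu
  · -- position `u`
    show r_G ≤ rate h c {e' v} ((Finset.Ioi v).image ⇑e')
    rw [hIu', he'app, hswapu]
    calc r_G ≤ rate h c {e v} ((Finset.Ioi v).image ⇑e) := hQ v hv
      _ = rate h c {e v} (insert (e u') T) := by rw [hIu]
      _ ≤ rate h c {e u'} (insert (e v) T) := hgo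
  rcases eq_or_ne v u' with rfl | hvu'
  · -- position `u'`
    show r_G ≤ rate h c {e' v} ((Finset.Ioi v).image ⇑e')
    rw [hIT', he'app, hswapu']
    have hPu : r_G ≤ rate h c {e u} ((Finset.Ioi u).image ⇑e) :=
      hQ u (le_trans hlt.le hv)
    rw [hIu] at hPu
    calc r_G ≤ rate h c {e u} (insert (e v) T) := hPu
      _ ≤ rate h c {e u} T := rate_insert_le h hc _ _ _
  · -- other positions
    have hP := hQ v hv
    show r_G ≤ rate h c {e' v} ((Finset.Ioi v).image ⇑e')
    rwa [himg v hvu, he'app, Equiv.swap_apply_of_ne_of_ne hvu hvu']
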